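/- Let m ≥ 2, let Δ be a flag normal (2m−1)-dimensional pseudomanifold with n vertices, and let σ be a facet of Δ. Suppose that for every face τ ⊆ σ of dimension 2m−4 (i.e., of cardinality 2m−3), the link lk(τ,Δ) is the suspension of a circle, and suppose that ∪_{δ⊆σ, |δ|=2m−2} V(lk(δ,Δ)) = V(Δ). Then Δ is the join of m circles. -/

import Mathlib

open Finset

variable {V : Type*} [DecidableEq V]

/-- A simplicial complex on (a subset of) the vertex type `V`: a collection of
finite sets (the faces) that contains the empty set and is closed under inclusion. -/
def IsComplex (Δ : Finset (Finset V)) : Prop :=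
  ∅ ∈ Δ ∧ ∀ σ ∈ Δ, ∀ τ ⊆ σ, τ ∈ Δ

/-- The vertex set `V(Δ)` of a complex. -/
def verts (Δ : Finset (Finset V)) : Finset V := Δ.sup id

/-- The link `lk(σ,Δ) = {τ ∈ Δ : τ ∩ σ = ∅ ∧ τ ∪ σ ∈ Δ}`. -/
def link (Δ : Finset (Finset V)) (σ : Finset V) : Finset (Finset V) :=
  Δ.filter fun τ => τ ∩ σ = ∅ ∧ τ ∪ σ ∈ Δ

/-- The induced subcomplex `Δ[W] = {σ ∈ Δ : σ ⊆ W}`. -/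
def induced (Δ : Finset (Finset V)) (W : Finset V) : Finset (Finset V) :=
  Δ.filter fun σ => σ ⊆ W

/-- `fNum Δ i` is the number `f_i(Δ)` of `i`-dimensional faces of `Δ`,
i.e. of faces of cardinality `i + 1`. -/
def fNum (Δ : Finset (Finset V)) (i : ℕ) : ℕ :=
  (Δ.filter fun σ => σ.card = i + 1).card

/-- `Δ` is flag: every set of vertices all of whose two-element subsets are
faces of `Δ` is itself a face of `Δ`.  (Taking `u = v` below, this in particular
requires each member of `S` to be a vertex of `Δ`.) -/
def IsFlag (Δ : Finset (Finset V)) : Prop :=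
  ∀ S : Finset V, (∀ u ∈ S, ∀ v ∈ S, ({u, v} : Finset V) ∈ Δ) → S ∈ Δ

/-- A facet: an inclusion-maximal face. -/
def IsFacet (Δ : Finset (Finset V)) (σ : Finset V) : Prop :=
  σ ∈ Δ ∧ ∀ τ ∈ Δ, σ ⊆ τ → τ = σ

/-- A `(d-1)`-dimensional pseudomanifold: a pure `(d-1)`-dimensional complex
(all facets have cardinality `d`) in which every `(d-2)`-dimensional face
(cardinality `d-1`) is contained in exactly two facets (= faces of cardinality `d`). -/
def IsPseudomanifold (Δ : Finset (Finset V)) (d : ℕ) : Prop :=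
  IsComplex Δ ∧ (∀ σ, IsFacet Δ σ → σ.card = d) ∧
    ∀ τ ∈ Δ, τ.card = d - 1 → (Δ.filter fun σ => σ.card = d ∧ τ ⊆ σ).card = 2

/-- The 1-skeleton graph of a complex. -/
def skGraph (Δ : Finset (Finset V)) : SimpleGraph V where
  Adj u v := u ≠ v ∧ ({u, v} : Finset V) ∈ Δ
  symm := ⟨fun u v h => ⟨h.1.symm, by rw [Finset.pair_comm]; exact h.2⟩⟩
  loopless := ⟨fun u h => h.1 rfl⟩

/-- The 1-skeleton graph, restricted to the vertex set of `Δ`, is connected. -/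
def ConnOn (Δ : Finset (Finset V)) : Prop :=
  ((skGraph Δ).induce (verts Δ : Set V)).Connected

/-- A normal `(d-1)`-pseudomanifold: the 1-skeleton is connected and the
1-skeleton of the link of each face of dimension at most `d-3`
(cardinality at most `d-2`) is connected. -/
def IsNormalPseudomanifold (Δ : Finset (Finset V)) (d : ℕ) : Prop :=
  IsPseudomanifold Δ d ∧ ConnOn Δ ∧
    ∀ σ ∈ Δ, σ.card + 2 ≤ d → ConnOn (link Δ σ)

/-- A circle (cycle): a connected 1-dimensional pseudomanifold. -/
def IsCircle (Δ : Finset (Finset V)) : Prop :=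
  IsPseudomanifold Δ 2 ∧ ConnOn Δ

/-- The 0-dimensional complex consisting of two disjoint vertices. -/
def IsTwoPoints (P : Finset (Finset V)) : Prop :=
  ∃ a b : V, a ≠ b ∧ P = {∅, {a}, {b}}

/-- The join of two complexes (on disjoint vertex sets): faces `σ ∪ τ`
with `σ ∈ Δ`, `τ ∈ Γ`. -/
def join (Δ Γ : Finset (Finset V)) : Finset (Finset V) :=
  (Δ ×ˢ Γ).image fun p => p.1 ∪ p.2

/-- `Δ` is the suspension of a circle: the join of a circle with two disjoint points. -/
def IsSuspensionOfCircle (Δ : Finset (Finset V)) : Prop :=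
  ∃ C P, IsCircle C ∧ IsTwoPoints P ∧ Disjoint (verts C) (verts P) ∧ Δ = join C P

/-- Iterated join of a family of complexes. -/
def joinFam : (m : ℕ) → (Fin m → Finset (Finset V)) → Finset (Finset V)
  | 0, _ => {∅}
  | m + 1, C => join (C 0) (joinFam m fun i => C i.succ)

/-- `Δ` is the join of `m` circles (on pairwise disjoint vertex sets). -/
def IsJoinOfCircles (Δ : Finset (Finset V)) (m : ℕ) : Prop :=
  ∃ C : Fin m → Finset (Finset V), (∀ i, IsCircle (C i)) ∧
    (∀ i j, i ≠ j → Disjoint (verts (C i)) (verts (C j))) ∧ Δ = joinFam m C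

/-- `a_k = Σ_{τ ⊆ σ, |τ| = k} f₀(lk(τ,Δ))`. -/
def aNum (Δ : Finset (Finset V)) (σ : Finset V) (k : ℕ) : ℕ :=
  ∑ τ ∈ σ.powersetCard k, fNum (link Δ τ) 0

/-- `W_τ`: the vertices `w` of `lk(τ,Δ)` with `{w,u} ∉ Δ` for every `u ∈ σ \ τ`. -/
def Wset (Δ : Finset (Finset V)) (σ τ : Finset V) : Finset V :=
  (verts (link Δ τ)).filter fun w => ∀ u ∈ σ \ τ, ({w, u} : Finset V) ∉ Δ

/-- `b_k = Σ_{τ ⊆ σ, |τ| = k} |W_τ|`. -/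
def bNum (Δ : Finset (Finset V)) (σ : Finset V) (k : ℕ) : ℕ :=
  ∑ τ ∈ σ.powersetCard k, (Wset Δ σ τ).card

/-- The Euler characteristic `χ(Δ) = Σ_{i ≥ 0} (-1)^i f_i(Δ)`, computed as a sum
of `(-1)^{|σ|-1}` over the nonempty faces `σ`. -/
def eulerChar (Δ : Finset (Finset V)) : ℤ :=
  ∑ σ ∈ Δ.filter (fun σ => σ ≠ ∅), (-1 : ℤ) ^ (σ.card - 1)

/-- `Δ` is Eulerian: for every face `σ` (including `σ = ∅`, whose link is `Δ`),
`χ(lk(σ,Δ)) = 1 + (-1)^{dim lk(σ,Δ)}`; since `dim lk(σ,Δ)` is one less than the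
maximal cardinality of a face of the link, this equals `1 - (-1)^{max card}`. -/
def IsEulerian (Δ : Finset (Finset V)) : Prop :=
  ∀ σ ∈ Δ, eulerChar (link Δ σ) = 1 - (-1) ^ ((link Δ σ).sup Finset.card)



/-! ### Basic lemmas -/

lemma mem_verts_iff {Δ : Finset (Finset V)} {x : V} :
    x ∈ verts Δ ↔ ∃ γ ∈ Δ, x ∈ γ := by
  simp [verts, Finset.mem_sup]

lemma face_subset_verts {Δ : Finset (Finset V)} {γ : Finset V} (h : γ ∈ Δ) :
    γ ⊆ verts Δ := fun x hx => mem_verts_iff.2 ⟨γ, h, hx⟩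

lemma singleton_mem_of_mem_verts {Δ : Finset (Finset V)} (hC : IsComplex Δ) {x : V}
    (h : x ∈ verts Δ) : ({x} : Finset V) ∈ Δ := by
  obtain ⟨γ, hγ, hx⟩ := mem_verts_iff.1 h
  exact hC.2 γ hγ {x} (Finset.singleton_subset_iff.2 hx)

lemma mem_verts_of_singleton_mem {Δ : Finset (Finset V)} {x : V}
    (h : ({x} : Finset V) ∈ Δ) : x ∈ verts Δ :=
  face_subset_verts h (Finset.mem_singleton_self x)

lemma pair_mem_of_face {Δ : Finset (Finset V)} (hC : IsComplex Δ) {γ : Finset V}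
    (h : γ ∈ Δ) {x y : V} (hx : x ∈ γ) (hy : y ∈ γ) : ({x, y} : Finset V) ∈ Δ :=
  hC.2 γ h _ (Finset.insert_subset hx (Finset.singleton_subset_iff.2 hy))

lemma mem_link {Δ : Finset (Finset V)} {ρ γ : Finset V} :
    γ ∈ link Δ ρ ↔ γ ∈ Δ ∧ γ ∩ ρ = ∅ ∧ γ ∪ ρ ∈ Δ := by
  simp [link, Finset.mem_filter]

lemma link_subset {Δ : Finset (Finset V)} {ρ γ : Finset V} (h : γ ∈ link Δ ρ) : γ ∈ Δ :=
  (mem_link.1 h).1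

lemma link_isComplex {Δ : Finset (Finset V)} (hC : IsComplex Δ) (ρ : Finset V) (hρ : ρ ∈ Δ) :
    IsComplex (link Δ ρ) := by
  constructor
  · exact mem_link.2 ⟨hC.1, by simp, by simpa using hρ⟩
  · intro γ hγ τ hτ
    rw [mem_link] at hγ ⊢
    refine ⟨hC.2 γ hγ.1 τ hτ, ?_, hC.2 _ hγ.2.2 _ (Finset.union_subset_union hτ le_rfl)⟩
    have := hγ.2.1
    rw [Finset.eq_empty_iff_forall_notMem] at this ⊢
    intro a ha
    exact this a (Finset.mem_inter.2 ⟨hτ (Finset.mem_inter.1 ha).1, (Finset.mem_inter.1 ha).2⟩)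

/-- every face is contained in a facet -/
lemma exists_facet_superset {Δ : Finset (Finset V)} {γ : Finset V} (h : γ ∈ Δ) :
    ∃ F, IsFacet Δ F ∧ γ ⊆ F := by
  classical
  set S := Δ.filter (fun τ => γ ⊆ τ) with hS
  have hne : S.Nonempty := ⟨γ, by simp [hS, h]⟩
  obtain ⟨F, hF, hmax⟩ := S.exists_max_image Finset.card hne
  rw [hS, Finset.mem_filter] at hF
  refine ⟨F, ⟨hF.1, ?_⟩, hF.2⟩
  intro τ hτ hsub
  have hτS : τ ∈ S := by rw [hS, Finset.mem_filter]; exact ⟨hτ, hF.2.trans hsub⟩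
  exact (Finset.eq_of_subset_of_card_le hsub (hmax τ hτS)).symm

/-! ### Pseudomanifold basics -/

lemma union_sdiff_of_inter_empty {a b : Finset V} (h : a ∩ b = ∅) : (a ∪ b) \ b = a := by
  ext x
  simp only [Finset.mem_sdiff, Finset.mem_union]
  constructor
  · rintro ⟨hx | hx, hxb⟩
    · exact hx
    · exact absurd hx hxb
  · intro hx
    refine ⟨Or.inl hx, fun hxb => ?_⟩
    have := Finset.eq_empty_iff_forall_notMem.1 h x
    exact this (Finset.mem_inter.2 ⟨hx, hxb⟩)

lemma face_card_le {Δ : Finset (Finset V)} {d : ℕ} (hPM : IsPseudomanifold Δ d)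
    {γ : Finset V} (h : γ ∈ Δ) : γ.card ≤ d := by
  obtain ⟨F, hF, hsub⟩ := exists_facet_superset h
  have := hPM.2.1 F hF
  exact this ▸ Finset.card_le_card hsub

lemma isFacet_of_card_eq {Δ : Finset (Finset V)} {d : ℕ} (hPM : IsPseudomanifold Δ d)
    {γ : Finset V} (h : γ ∈ Δ) (hc : γ.card = d) : IsFacet Δ γ := by
  refine ⟨h, fun τ hτ hsub => ?_⟩
  exact (Finset.eq_of_subset_of_card_le hsub (by rw [hc]; exact face_card_le hPM hτ)).symm

/-- The link of a codimension-2 face of a normal pseudomanifold is a circle. -/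
lemma link_codim2_isCircle {Δ : Finset (Finset V)} {d : ℕ}
    (hN : IsNormalPseudomanifold Δ d) (hd : 2 ≤ d) {ρ : Finset V} (hρ : ρ ∈ Δ)
    (hcard : ρ.card = d - 2) : IsCircle (link Δ ρ) := by
  obtain ⟨hPM, _, hlinks⟩ := hN
  have hCplx := hPM.1
  have hdisj : ∀ {γ : Finset V}, γ ∈ link Δ ρ → γ ∩ ρ = ∅ := fun h => (mem_link.1 h).2.1
  have hcard_union : ∀ {γ : Finset V}, γ ∈ link Δ ρ → (γ ∪ ρ).card = γ.card + (d - 2) := by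
    intro γ hγ
    rw [Finset.card_union_of_disjoint (Finset.disjoint_iff_inter_eq_empty.2 (hdisj hγ)), hcard]
  have hle2 : ∀ {γ : Finset V}, γ ∈ link Δ ρ → γ.card ≤ 2 := by
    intro γ hγ
    have h1 : (γ ∪ ρ).card ≤ d := face_card_le hPM (mem_link.1 hγ).2.2
    rw [hcard_union hγ] at h1
    omega
  -- faces of the link of card 2 exist (completion of ρ to a facet)
  have hfacet2 : ∀ {γ : Finset V}, γ ∈ link Δ ρ → ∃ e ∈ link Δ ρ, γ ⊆ e ∧ e.card = 2 := by
    intro γ hγ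
    obtain ⟨F, hF, hsub⟩ := exists_facet_superset (mem_link.1 hγ).2.2
    have hFcard : F.card = d := hPM.2.1 F hF
    have hρF : ρ ⊆ F := (Finset.union_subset_iff.1 hsub).2
    have hγF : γ ⊆ F \ ρ := by
      intro x hx
      rw [Finset.mem_sdiff]
      refine ⟨hsub (Finset.mem_union_left _ hx), fun hxρ => ?_⟩
      have := hdisj hγ
      rw [Finset.eq_empty_iff_forall_notMem] at this
      exact this x (Finset.mem_inter.2 ⟨hx, hxρ⟩)
    refine ⟨F \ ρ, mem_link.2 ⟨hCplx.2 F hF.1 _ Finset.sdiff_subset, ?_, ?_⟩, hγF, ?_⟩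
    · rw [Finset.eq_empty_iff_forall_notMem]
      intro a ha
      rw [Finset.mem_inter, Finset.mem_sdiff] at ha
      exact ha.1.2 ha.2
    · rw [Finset.sdiff_union_of_subset hρF]; exact hF.1
    · rw [Finset.card_sdiff_of_subset hρF, hFcard, hcard]; omega
  refine ⟨⟨link_isComplex hCplx ρ hρ, ?_, ?_⟩, ?_⟩
  · -- facets have card 2
    intro γ hγ
    obtain ⟨e, he, hsub, hecard⟩ := hfacet2 hγ.1
    rw [hγ.2 e he hsub] at hecard; exact hecard
  · -- each vertex of the link is in exactly 2 edges
    intro τ hτ hτcard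
    have hτΔ : τ ∪ ρ ∈ Δ := (mem_link.1 hτ).2.2
    have hτρcard : (τ ∪ ρ).card = d - 1 := by rw [hcard_union hτ, hτcard]; omega
    have hPM2 := hPM.2.2 (τ ∪ ρ) hτΔ hτρcard
    refine Eq.trans ?_ hPM2
    apply Finset.card_nbij (fun e => e ∪ ρ)
    · intro e he
      simp only [Finset.mem_coe, Finset.mem_filter] at he ⊢
      obtain ⟨he1, he2, he3⟩ := he
      refine ⟨(mem_link.1 he1).2.2, ?_, Finset.union_subset_union he3 le_rfl⟩
      rw [hcard_union he1, he2]; omega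
    · intro e1 he1 e2 he2 heq
      simp only [Finset.mem_coe, Finset.mem_filter] at he1 he2
      have d1 : (e1 ∪ ρ) \ ρ = e1 := union_sdiff_of_inter_empty (hdisj he1.1)
      have d2 : (e2 ∪ ρ) \ ρ = e2 := union_sdiff_of_inter_empty (hdisj he2.1)
      simp only at heq
      rw [← d1, ← d2, heq]
    · intro F hF
      simp only [Finset.mem_coe, Finset.mem_filter, Set.mem_image] at hF ⊢
      obtain ⟨hF1, hF2, hF3⟩ := hF
      have hρF : ρ ⊆ F := (Finset.union_subset_iff.1 hF3).2
      have hτF : τ ⊆ F := (Finset.union_subset_iff.1 hF3).1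
      have hτρ : τ ∩ ρ = ∅ := (mem_link.1 hτ).2.1
      refine ⟨F \ ρ, ⟨mem_link.2 ⟨hCplx.2 F hF1 _ Finset.sdiff_subset, ?_, ?_⟩, ?_, ?_⟩, ?_⟩
      · rw [Finset.eq_empty_iff_forall_notMem]
        intro a ha
        rw [Finset.mem_inter, Finset.mem_sdiff] at ha
        exact ha.1.2 ha.2
      · rw [Finset.sdiff_union_of_subset hρF]; exact hF1
      · rw [Finset.card_sdiff_of_subset hρF, hF2, hcard]; omega
      · intro x hx
        rw [Finset.mem_sdiff]
        refine ⟨hτF hx, fun hxρ => ?_⟩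
        rw [Finset.eq_empty_iff_forall_notMem] at hτρ
        exact hτρ x (Finset.mem_inter.2 ⟨hx, hxρ⟩)
      · rw [Finset.sdiff_union_of_subset hρF]
  · -- connectivity
    exact hlinks ρ hρ (by omega)

/-! ### Circles, connectivity, flag glue -/

lemma circle_face_card_le {C : Finset (Finset V)} (hC : IsCircle C) {γ : Finset V}
    (h : γ ∈ C) : γ.card ≤ 2 := face_card_le hC.1 h

lemma circle_edges_at {C : Finset (Finset V)} (hC : IsCircle C) {x : V}
    (hx : x ∈ verts C) :
    (C.filter fun e => e.card = 2 ∧ ({x} : Finset V) ⊆ e).card = 2 := by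
  have h1 : ({x} : Finset V) ∈ C := singleton_mem_of_mem_verts hC.1.1 hx
  exact hC.1.2.2 {x} h1 (by simp)

lemma verts_eq_of_closed {C : Finset (Finset V)} (hConn : ConnOn C) {W : Finset V}
    (hW : W ⊆ verts C) (hne : W.Nonempty)
    (hcl : ∀ x y : V, x ∈ W → ({x, y} : Finset V) ∈ C → y ∈ W) : W = verts C := by
  obtain ⟨x0, hx0⟩ := hne
  apply Finset.Subset.antisymm hW
  intro y hy
  have hx0v : x0 ∈ verts C := hW hx0
  have key : ∀ (a b : (verts C : Set V)) (_ : ((skGraph C).induce (verts C : Set V)).Walk a b),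
      (a : V) ∈ W → (b : V) ∈ W := by
    intro a b w
    induction w with
    | nil => exact id
    | cons h p ih =>
      intro ha
      exact ih (hcl _ _ ha (show _ ≠ _ ∧ _ from h).2)
  obtain ⟨w⟩ := hConn.preconnected ⟨x0, by exact hx0v⟩ ⟨y, by exact hy⟩
  exact key _ _ w hx0

lemma flag_clique_mem {Δ : Finset (Finset V)} (hF : IsFlag Δ) (hC : IsComplex Δ)
    {S : Finset V} (hv : ∀ x ∈ S, x ∈ verts Δ)
    (he : ∀ x ∈ S, ∀ y ∈ S, x ≠ y → ({x, y} : Finset V) ∈ Δ) : S ∈ Δ := by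
  apply hF
  intro u hu v hv'
  by_cases huv : u = v
  · subst huv
    simpa using singleton_mem_of_mem_verts hC (hv u hu)
  · exact he u hu v hv' huv

lemma mem_verts_link {Δ : Finset (Finset V)} (hF : IsFlag Δ) (hC : IsComplex Δ)
    {ρ : Finset V} (hρ : ρ ∈ Δ) {x : V} :
    x ∈ verts (link Δ ρ) ↔
      x ∈ verts Δ ∧ x ∉ ρ ∧ ∀ r ∈ ρ, ({x, r} : Finset V) ∈ Δ := by
  constructor
  · intro h
    obtain ⟨γ, hγ, hxγ⟩ := mem_verts_iff.1 h
    have hx1 : ({x} : Finset V) ∈ link Δ ρ :=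
      (link_isComplex hC ρ hρ).2 γ hγ {x} (Finset.singleton_subset_iff.2 hxγ)
    obtain ⟨hxΔ, hdisj, hun⟩ := mem_link.1 hx1
    refine ⟨mem_verts_of_singleton_mem hxΔ, ?_, ?_⟩
    · intro hxρ
      have := Finset.eq_empty_iff_forall_notMem.1 hdisj x
      exact this (Finset.mem_inter.2 ⟨Finset.mem_singleton_self x, hxρ⟩)
    · intro r hr
      exact pair_mem_of_face hC hun (Finset.mem_union_left _ (Finset.mem_singleton_self x))
        (Finset.mem_union_right _ hr)
  · rintro ⟨hxΔ, hxρ, hadj⟩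
    have hS : insert x ρ ∈ Δ := by
      apply flag_clique_mem hF hC
      · intro u hu
        rcases Finset.mem_insert.1 hu with h | h
        · exact h ▸ hxΔ
        · exact face_subset_verts hρ h
      · intro u hu v hv huv
        rcases Finset.mem_insert.1 hu with h1 | h1 <;> rcases Finset.mem_insert.1 hv with h2 | h2
        · exact absurd (h1.trans h2.symm) huv
        · exact h1 ▸ hadj v h2
        · rw [Finset.pair_comm]; exact h2 ▸ hadj u h1
        · exact pair_mem_of_face hC hρ h1 h2
    apply mem_verts_of_singleton_mem
    apply mem_link.2
    refine ⟨singleton_mem_of_mem_verts hC hxΔ, by simp [hxρ], ?_⟩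
    rwa [show ({x} : Finset V) ∪ ρ = insert x ρ from rfl]

lemma link_induced_edge {Δ : Finset (Finset V)} (hF : IsFlag Δ) (hC : IsComplex Δ)
    {ρ : Finset V} (hρ : ρ ∈ Δ) {x y : V} (hx : x ∈ verts (link Δ ρ))
    (hy : y ∈ verts (link Δ ρ)) (hxy : ({x, y} : Finset V) ∈ Δ) :
    ({x, y} : Finset V) ∈ link Δ ρ := by
  obtain ⟨hxΔ, hxρ, hxa⟩ := (mem_verts_link hF hC hρ).1 hx
  obtain ⟨hyΔ, hyρ, hya⟩ := (mem_verts_link hF hC hρ).1 hy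
  have hun : ({x, y} : Finset V) ∪ ρ ∈ Δ := by
    apply flag_clique_mem hF hC
    · intro u hu
      rcases Finset.mem_union.1 hu with h | h
      · rcases Finset.mem_insert.1 h with h1 | h1
        · exact h1 ▸ hxΔ
        · exact (Finset.mem_singleton.1 h1) ▸ hyΔ
      · exact face_subset_verts hρ h
    · intro u hu v hv huv
      rcases Finset.mem_union.1 hu with h1 | h1 <;> rcases Finset.mem_union.1 hv with h2 | h2
      · exact hC.2 _ hxy _ (Finset.insert_subset h1 (Finset.singleton_subset_iff.2 h2))
      · rcases Finset.mem_insert.1 h1 with h3 | h3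
        · exact h3 ▸ hxa v h2
        · exact (Finset.mem_singleton.1 h3) ▸ hya v h2
      · rw [Finset.pair_comm]
        rcases Finset.mem_insert.1 h2 with h3 | h3
        · exact h3 ▸ hxa u h1
        · exact (Finset.mem_singleton.1 h3) ▸ hya u h1
      · exact pair_mem_of_face hC hρ h1 h2
  refine mem_link.2 ⟨hxy, ?_, hun⟩
  rw [Finset.eq_empty_iff_forall_notMem]
  intro a ha
  rw [Finset.mem_inter] at ha
  rcases Finset.mem_insert.1 ha.1 with h | h
  · exact hxρ (h ▸ ha.2)
  · exact hyρ ((Finset.mem_singleton.1 h) ▸ ha.2)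

/-! ### Joins and suspensions -/

lemma mem_join {A B : Finset (Finset V)} {γ : Finset V} :
    γ ∈ join A B ↔ ∃ a ∈ A, ∃ b ∈ B, γ = a ∪ b := by
  simp only [join, Finset.mem_image, Finset.mem_product, Prod.exists]
  constructor
  · rintro ⟨a, b, ⟨ha, hb⟩, h⟩; exact ⟨a, ha, b, hb, h.symm⟩
  · rintro ⟨a, ha, b, hb, h⟩; exact ⟨a, b, ⟨ha, hb⟩, h.symm⟩

lemma verts_twoPoints {P : Finset (Finset V)} (hP : IsTwoPoints P) :
    ∃ a b : V, a ≠ b ∧ P = {∅, {a}, {b}} ∧ verts P = {a, b} := by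
  obtain ⟨a, b, hab, hPe⟩ := hP
  refine ⟨a, b, hab, hPe, ?_⟩
  subst hPe
  ext x
  simp only [verts, Finset.mem_sup, id]
  constructor
  · rintro ⟨γ, hγ, hx⟩
    simp only [Finset.mem_insert, Finset.mem_singleton] at hγ
    rcases hγ with rfl | rfl | rfl
    · simp at hx
    · simp only [Finset.mem_singleton] at hx; simp [hx]
    · simp only [Finset.mem_singleton] at hx; simp [hx]
  · intro hx
    rcases Finset.mem_insert.1 hx with rfl | hx
    · exact ⟨{x}, by simp, by simp⟩
    · rw [Finset.mem_singleton] at hx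
      subst hx
      exact ⟨{x}, by simp, by simp⟩

/-- Structure facts about a suspension of a circle. -/
lemma suspension_facts {L : Finset (Finset V)} (hs : IsSuspensionOfCircle L) :
    ∃ (C : Finset (Finset V)) (a b : V), IsCircle C ∧ a ≠ b ∧
      a ∉ verts C ∧ b ∉ verts C ∧
      verts L = verts C ∪ {a, b} ∧
      (∀ x y : V, x ∈ verts C → y ∈ verts C → ({x, y} : Finset V) ∈ L →
        ({x, y} : Finset V) ∈ C) ∧
      (∀ x : V, x ∈ verts C → ({x, a} : Finset V) ∈ L ∧ ({x, b} : Finset V) ∈ L) ∧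
      (∀ γ : Finset V, γ ∈ L → γ ⊆ verts C → γ.card ≤ 2) ∧
      ({a, b} : Finset V) ∉ L := by
  obtain ⟨C, P, hC, hP, hdisj, rfl⟩ := hs
  obtain ⟨a, b, hab, hPe, hvP⟩ := verts_twoPoints hP
  have haP : a ∈ verts P := by rw [hvP]; simp
  have hbP : b ∈ verts P := by rw [hvP]; simp
  have haC : a ∉ verts C := fun h => (Finset.disjoint_left.1 hdisj h) haP
  have hbC : b ∉ verts C := fun h => (Finset.disjoint_left.1 hdisj h) hbP
  have hCP : ∀ {s : Finset V}, s ∈ C → a ∉ s ∧ b ∉ s := by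
    intro s hsC
    exact ⟨fun h => haC (face_subset_verts hsC h), fun h => hbC (face_subset_verts hsC h)⟩
  have hsubC : ∀ {γ : Finset V}, γ ∈ join C P → γ ⊆ verts C → γ ∈ C := by
    intro γ hγ hγC
    obtain ⟨s, hsC, t, htP, rfl⟩ := mem_join.1 hγ
    have ht : t = ∅ := by
      rw [hPe] at htP
      simp only [Finset.mem_insert, Finset.mem_singleton] at htP
      rcases htP with rfl | rfl | rfl
      · rfl
      · exact absurd (hγC (by simp)) haC
      · exact absurd (hγC (by simp)) hbC
    rw [ht, Finset.union_empty]
    exact hsC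
  refine ⟨C, a, b, hC, hab, haC, hbC, ?_, ?_, ?_, ?_, ?_⟩
  · -- vertex set
    ext x
    simp only [Finset.mem_union]
    constructor
    · intro hx
      obtain ⟨γ, hγ, hxγ⟩ := mem_verts_iff.1 hx
      obtain ⟨s, hsC, t, htP, rfl⟩ := mem_join.1 hγ
      rcases Finset.mem_union.1 hxγ with h | h
      · exact Or.inl (face_subset_verts hsC h)
      · right
        rw [hPe] at htP
        simp only [Finset.mem_insert, Finset.mem_singleton] at htP
        rcases htP with rfl | rfl | rfl
        · simp at h
        · rw [Finset.mem_singleton] at h; simp [h]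
        · rw [Finset.mem_singleton] at h; simp [h]
    · rintro (hx | hx)
      · obtain ⟨γ, hγ, hxγ⟩ := mem_verts_iff.1 hx
        exact mem_verts_iff.2 ⟨γ ∪ ∅, mem_join.2 ⟨γ, hγ, ∅, by rw [hPe]; simp, rfl⟩,
          by simpa using hxγ⟩
      · have hx' : x = a ∨ x = b := by
          rcases Finset.mem_insert.1 hx with h | h
          · exact Or.inl h
          · exact Or.inr (Finset.mem_singleton.1 h)
        have hxP : ({x} : Finset V) ∈ P := by
          rw [hPe]; rcases hx' with rfl | rfl <;> simp
        exact mem_verts_iff.2 ⟨∅ ∪ {x}, mem_join.2 ⟨∅, hC.1.1.1, {x}, hxP, rfl⟩, by simp⟩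
  · -- induced edges within the circle part
    intro x y hx hy hxy
    apply hsubC hxy
    intro z hz
    rcases Finset.mem_insert.1 hz with rfl | hz
    · exact hx
    · rw [Finset.mem_singleton] at hz; exact hz ▸ hy
  · -- apexes adjacent to circle vertices
    intro x hx
    constructor
    · refine mem_join.2 ⟨{x}, singleton_mem_of_mem_verts hC.1.1 hx, {a}, by rw [hPe]; simp, ?_⟩
      ext z; simp
    · refine mem_join.2 ⟨{x}, singleton_mem_of_mem_verts hC.1.1 hx, {b}, by rw [hPe]; simp, ?_⟩
      ext z; simp
  · -- faces inside the circle part have card ≤ 2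
    intro γ hγ hγC
    exact circle_face_card_le hC (hsubC hγ hγC)
  · -- the two apexes are not adjacent
    intro h
    obtain ⟨s, hsC, t, htP, he⟩ := mem_join.1 h
    have has : a ∉ s := (hCP hsC).1
    have hbs : b ∉ s := (hCP hsC).2
    have hat : a ∈ t := by
      have : a ∈ s ∪ t := by rw [← he]; simp
      rcases Finset.mem_union.1 this with h' | h'
      · exact absurd h' has
      · exact h'
    have hbt : b ∈ t := by
      have : b ∈ s ∪ t := by rw [← he]; simp
      rcases Finset.mem_union.1 this with h' | h'
      · exact absurd h' hbs
      · exact h'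
    rw [hPe] at htP
    simp only [Finset.mem_insert, Finset.mem_singleton] at htP
    rcases htP with rfl | rfl | rfl
    · simp at hat
    · rw [Finset.mem_singleton] at hbt; exact hab hbt.symm
    · rw [Finset.mem_singleton] at hat; exact hab hat

/-! ### Pairings and iterated joins -/

lemma circle_verts_nonempty {C : Finset (Finset V)} (hC : IsCircle C) :
    (verts C).Nonempty := by
  obtain ⟨F, hF, -⟩ := exists_facet_superset hC.1.1.1
  have : F.card = 2 := hC.1.2.1 F hF
  have : F.Nonempty := Finset.card_pos.1 (by omega)
  obtain ⟨x, hx⟩ := this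
  exact ⟨x, face_subset_verts hF.1 hx⟩

lemma circle_exists_edge_at {C : Finset (Finset V)} (hC : IsCircle C) {x : V}
    (hx : x ∈ verts C) : ∃ e ∈ C, e.card = 2 ∧ x ∈ e := by
  have h2 := circle_edges_at hC hx
  have : (C.filter fun e => e.card = 2 ∧ ({x} : Finset V) ⊆ e).Nonempty :=
    Finset.card_pos.1 (by omega)
  obtain ⟨e, he⟩ := this
  rw [Finset.mem_filter] at he
  exact ⟨e, he.1, he.2.1, he.2.2 (Finset.mem_singleton_self x)⟩

lemma exists_pair_partition : ∀ (k : ℕ) (T : Finset V), T.card = 2 * k →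
    ∃ N : Finset (Finset V), (∀ p ∈ N, p.card = 2 ∧ p ⊆ T) ∧
      (∀ p ∈ N, ∀ q ∈ N, p ≠ q → p ∩ q = ∅) ∧ N.biUnion id = T ∧ N.card = k := by
  intro k
  induction k with
  | zero =>
    intro T hT
    refine ⟨∅, by simp, by simp, ?_, rfl⟩
    have hTe : T = ∅ := Finset.card_eq_zero.1 (by simpa using hT)
    simp [hTe]
  | succ n ih =>
    intro T hT
    have hTne : T.Nonempty := Finset.card_pos.1 (by omega)
    obtain ⟨x, hx⟩ := hTne
    have hTx : (T.erase x).Nonempty := by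
      apply Finset.card_pos.1
      rw [Finset.card_erase_of_mem hx]
      omega
    obtain ⟨y, hy⟩ := hTx
    have hxy : x ≠ y := fun h => (Finset.mem_erase.1 hy).1 h.symm
    have hyT : y ∈ T := (Finset.mem_erase.1 hy).2
    set T' := (T.erase x).erase y with hT'
    have hT'card : T'.card = 2 * n := by
      rw [hT', Finset.card_erase_of_mem hy, Finset.card_erase_of_mem hx, hT]
      omega
    obtain ⟨N', hN1, hN2, hN3, hN4⟩ := ih T' hT'card
    have hxT' : x ∉ T' := by simp [hT']
    have hyT' : y ∉ T' := by simp [hT']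
    have hpair : ({x, y} : Finset V) ∉ N' := by
      intro h
      exact hxT' ((hN1 _ h).2 (by simp))
    refine ⟨insert {x, y} N', ?_, ?_, ?_, ?_⟩
    · intro p hp
      rcases Finset.mem_insert.1 hp with rfl | hp
      · exact ⟨Finset.card_pair hxy, by
          intro z hz
          rcases Finset.mem_insert.1 hz with rfl | hz
          · exact hx
          · rw [Finset.mem_singleton] at hz; exact hz ▸ hyT⟩
      · obtain ⟨h1, h2⟩ := hN1 p hp
        refine ⟨h1, h2.trans ?_⟩
        intro z hz
        exact Finset.mem_of_mem_erase (Finset.mem_of_mem_erase hz)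
    · intro p hp q hq hpq
      have cross : ∀ q' ∈ N', ({x, y} : Finset V) ∩ q' = ∅ := by
        intro q' hq'
        rw [Finset.eq_empty_iff_forall_notMem]
        intro z hz
        rw [Finset.mem_inter] at hz
        have hzT' : z ∈ T' := (hN1 q' hq').2 hz.2
        rcases Finset.mem_insert.1 hz.1 with rfl | h
        · exact hxT' hzT'
        · rw [Finset.mem_singleton] at h; exact hyT' (h ▸ hzT')
      rcases Finset.mem_insert.1 hp with rfl | hp <;> rcases Finset.mem_insert.1 hq with rfl | hq
      · exact absurd rfl hpq
      · exact cross q hq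
      · rw [Finset.inter_comm]; exact cross p hp
      · exact hN2 p hp q hq hpq
    · rw [Finset.biUnion_insert, hN3]
      ext z
      simp only [Finset.mem_union, id_eq, Finset.mem_insert, Finset.mem_singleton, hT',
        Finset.mem_erase]
      constructor
      · rintro ((rfl | rfl) | ⟨-, -, h⟩)
        · exact hx
        · exact hyT
        · exact h
      · intro hz
        by_cases h1 : z = x
        · exact Or.inl (Or.inl h1)
        by_cases h2 : z = y
        · exact Or.inl (Or.inr h2)
        · exact Or.inr ⟨h2, h1, hz⟩
    · rw [Finset.card_insert_of_notMem hpair, hN4]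

lemma exists_pairing (m : ℕ) (σ : Finset V) (hσ : σ.card = 2 * m)
    (M : Finset (Finset V)) (hM : ∀ p ∈ M, p.card = 2 ∧ p ⊆ σ)
    (hMd : ∀ p ∈ M, ∀ q ∈ M, p ≠ q → p ∩ q = ∅) :
    ∃ N : Finset (Finset V), M ⊆ N ∧ (∀ p ∈ N, p.card = 2 ∧ p ⊆ σ) ∧
      (∀ p ∈ N, ∀ q ∈ N, p ≠ q → p ∩ q = ∅) ∧ N.biUnion id = σ ∧ N.card = m := by
  classical
  set U := M.biUnion id with hU
  have hUσ : U ⊆ σ := by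
    intro z hz
    obtain ⟨p, hp, hzp⟩ := Finset.mem_biUnion.1 hz
    exact (hM p hp).2 hzp
  have hUcard : U.card = 2 * M.card := by
    rw [hU, Finset.card_biUnion]
    · simp only [id_eq]
      rw [Finset.sum_congr rfl (fun p hp => (hM p hp).1), Finset.sum_const, smul_eq_mul,
        Nat.mul_comm]
    · intro p hp q hq hpq
      exact Finset.disjoint_iff_inter_eq_empty.2 (hMd p hp q hq hpq)
  have hMm : M.card ≤ m := by
    have := Finset.card_le_card hUσ
    omega
  have hTcard : (σ \ U).card = 2 * (m - M.card) := by
    rw [Finset.card_sdiff_of_subset hUσ, hσ, hUcard]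
    omega
  obtain ⟨N', hN1, hN2, hN3, hN4⟩ := exists_pair_partition (m - M.card) (σ \ U) hTcard
  have hcross : ∀ p ∈ M, ∀ q ∈ N', p ∩ q = ∅ := by
    intro p hp q hq
    rw [Finset.eq_empty_iff_forall_notMem]
    intro z hz
    rw [Finset.mem_inter] at hz
    have h1 : z ∈ σ \ U := (hN1 q hq).2 hz.2
    exact (Finset.mem_sdiff.1 h1).2 (Finset.mem_biUnion.2 ⟨p, hp, hz.1⟩)
  have hMN' : Disjoint M N' := by
    rw [Finset.disjoint_left]
    intro p hpM hpN'
    have := hcross p hpM p hpN'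
    rw [Finset.inter_self] at this
    have h2 := (hM p hpM).1
    rw [this] at h2
    simp at h2
  refine ⟨M ∪ N', Finset.subset_union_left, ?_, ?_, ?_, ?_⟩
  · intro p hp
    rcases Finset.mem_union.1 hp with hp | hp
    · exact hM p hp
    · exact ⟨(hN1 p hp).1, ((hN1 p hp).2).trans Finset.sdiff_subset⟩
  · intro p hp q hq hpq
    rcases Finset.mem_union.1 hp with hp | hp <;> rcases Finset.mem_union.1 hq with hq | hq
    · exact hMd p hp q hq hpq
    · exact hcross p hp q hq
    · rw [Finset.inter_comm]; exact hcross q hq p hp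
    · exact hN2 p hp q hq hpq
  · ext z
    simp only [Finset.mem_biUnion, Finset.mem_union, id_eq]
    constructor
    · rintro ⟨p, hp | hp, hzp⟩
      · exact (hM p hp).2 hzp
      · exact (Finset.mem_sdiff.1 ((hN1 p hp).2 hzp)).1
    · intro hz
      by_cases hzU : z ∈ U
      · obtain ⟨p, hp, h⟩ := Finset.mem_biUnion.1 hzU
        exact ⟨p, Or.inl hp, h⟩
      · have h1 : z ∈ σ \ U := Finset.mem_sdiff.2 ⟨hz, hzU⟩
        rw [← hN3] at h1
        obtain ⟨p, hp, h⟩ := Finset.mem_biUnion.1 h1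
        exact ⟨p, Or.inr hp, h⟩
  · rw [Finset.card_union_of_disjoint hMN', hN4]
    omega

lemma mem_joinFam : ∀ (k : ℕ) (C : Fin k → Finset (Finset V)) (γ : Finset V),
    γ ∈ joinFam k C ↔ ∃ f : Fin k → Finset V, (∀ i, f i ∈ C i) ∧ γ = Finset.univ.sup f := by
  intro k
  induction k with
  | zero =>
    intro C γ
    simp only [joinFam, Finset.mem_singleton]
    constructor
    · intro h
      exact ⟨fun i => i.elim0, fun i => i.elim0, by simp [h]⟩
    · rintro ⟨f, -, rfl⟩
      simp
  | succ n ih =>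
    intro C γ
    simp only [joinFam, mem_join]
    constructor
    · rintro ⟨a, ha, b, hb, rfl⟩
      obtain ⟨g, hg, rfl⟩ := (ih _ b).1 hb
      refine ⟨Fin.cases a g, ?_, ?_⟩
      · intro i
        induction i using Fin.cases with
        | zero => simpa using ha
        | succ j => simpa using hg j
      · rw [Fin.univ_succ, Finset.sup_cons, Finset.sup_map]
        simp [Function.comp_def, Finset.sup_eq_union]
    · rintro ⟨f, hf, rfl⟩
      refine ⟨f 0, hf 0, Finset.univ.sup (f ∘ Fin.succ), ?_, ?_⟩
      · exact (ih _ _).2 ⟨f ∘ Fin.succ, fun j => hf j.succ, rfl⟩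
      · rw [Fin.univ_succ, Finset.sup_cons, Finset.sup_map]
        rfl

/-- Let `m ≥ 2`, let `Δ` be a flag normal
`(2m-1)`-dimensional pseudomanifold and `σ` a facet.  If the link of every
face `τ ⊆ σ` of cardinality `2m - 3` is the suspension of a circle, and
`∪_{δ ⊆ σ, |δ| = 2m-2} V(lk(δ,Δ)) = V(Δ)`, then `Δ` is the join of `m` circles. -/
theorem join_of_circles_criterion (m : ℕ) (hm : 2 ≤ m) (Δ : Finset (Finset V))
    (hF : IsFlag Δ) (hN : IsNormalPseudomanifold Δ (2 * m)) (n : ℕ)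
    (hn : (verts Δ).card = n) (σ : Finset V) (hσ : IsFacet Δ σ)
    (hsusp : ∀ τ ⊆ σ, τ.card = 2 * m - 3 → IsSuspensionOfCircle (link Δ τ))
    (hcov : ((σ.powersetCard (2 * m - 2)).biUnion fun δ => verts (link Δ δ)) = verts Δ) :
    IsJoinOfCircles Δ m := by
  classical
  obtain ⟨hPM, hConnΔ, hlinks⟩ := hN
  have hCplx : IsComplex Δ := hPM.1
  have hσΔ : σ ∈ Δ := hσ.1
  have hσcard : σ.card = 2 * m := hPM.2.1 σ hσ
  have hσverts : σ ⊆ verts Δ := face_subset_verts hσΔ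
  have hsub_faces : ∀ τ ⊆ σ, τ ∈ Δ := fun τ h => hCplx.2 σ hσΔ τ h
  -- the set of non-neighbors of z inside σ
  set ms : V → Finset V := fun z => σ.filter (fun u => ({z, u} : Finset V) ∉ Δ) with hms
  have hms_mem : ∀ z u, u ∈ ms z ↔ u ∈ σ ∧ ({z, u} : Finset V) ∉ Δ := by
    intro z u; simp [hms]
  have hms_sub : ∀ z, ms z ⊆ σ := fun z => Finset.filter_subset _ _
  have hadj_of_not_ms : ∀ z u, u ∈ σ → u ∉ ms z → ({z, u} : Finset V) ∈ Δ := by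
    intro z u hu hnm
    by_contra h
    exact hnm ((hms_mem z u).2 ⟨hu, h⟩)
  have hms_sigma : ∀ z ∈ σ, ms z = ∅ := by
    intro z hz
    rw [Finset.eq_empty_iff_forall_notMem]
    intro u hu
    obtain ⟨huσ, hne⟩ := (hms_mem z u).1 hu
    exact hne (pair_mem_of_face hCplx hσΔ hz huσ)
  -- Step 1a : every vertex outside σ has a non-neighbor in σ
  have hms_ne : ∀ z ∈ verts Δ, z ∉ σ → (ms z).Nonempty := by
    intro z hz hzσ
    rw [Finset.nonempty_iff_ne_empty]
    intro hem
    have hins : insert z σ ∈ Δ := by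
      apply flag_clique_mem hF hCplx
      · intro u hu
        rcases Finset.mem_insert.1 hu with rfl | hu
        · exact hz
        · exact hσverts hu
      · intro u hu v hv huv
        rcases Finset.mem_insert.1 hu with h1 | h1 <;> rcases Finset.mem_insert.1 hv with h2 | h2
        · exact absurd (h1.trans h2.symm) huv
        · rw [h1]; exact hadj_of_not_ms z v h2 (by rw [hem]; exact Finset.notMem_empty v)
        · rw [h2, Finset.pair_comm]
          exact hadj_of_not_ms z u h1 (by rw [hem]; exact Finset.notMem_empty u)
        · exact pair_mem_of_face hCplx hσΔ h1 h2
    have := hσ.2 _ hins (Finset.subset_insert z σ)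
    exact hzσ (this ▸ Finset.mem_insert_self z σ)
  -- Step 1b : every vertex has at most 2 non-neighbors in σ
  have hms_le2 : ∀ z ∈ verts Δ, (ms z).card ≤ 2 := by
    intro z hz
    rw [← hcov] at hz
    obtain ⟨δ, hδ, hzδ⟩ := Finset.mem_biUnion.1 hz
    obtain ⟨hδσ, hδcard⟩ := Finset.mem_powersetCard.1 hδ
    have hδΔ : δ ∈ Δ := hsub_faces δ hδσ
    obtain ⟨-, -, hadj⟩ := (mem_verts_link hF hCplx hδΔ).1 hzδ
    have hsub : ms z ⊆ σ \ δ := by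
      intro u hu
      obtain ⟨huσ, hne⟩ := (hms_mem z u).1 hu
      rw [Finset.mem_sdiff]
      exact ⟨huσ, fun huδ => hne (hadj u huδ)⟩
    calc (ms z).card ≤ (σ \ δ).card := Finset.card_le_card hsub
      _ = 2 := by rw [Finset.card_sdiff_of_subset hδσ, hσcard, hδcard]; omega
  -- links of complements of pairs
  have hδface : ∀ p : Finset V, σ \ p ∈ Δ := fun p => hsub_faces _ Finset.sdiff_subset
  have hZcircle : ∀ p ⊆ σ, p.card = 2 → IsCircle (link Δ (σ \ p)) := by
    intro p hpσ hp2
    apply link_codim2_isCircle ⟨hPM, hConnΔ, hlinks⟩ (by omega) (hδface p)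
    rw [Finset.card_sdiff_of_subset hpσ, hσcard, hp2]
  have hvZ : ∀ p ⊆ σ, ∀ z, z ∈ verts (link Δ (σ \ p)) ↔
      z ∈ verts Δ ∧ z ∉ σ \ p ∧ ms z ⊆ p := by
    intro p hpσ z
    rw [mem_verts_link hF hCplx (hδface p)]
    constructor
    · rintro ⟨h1, h2, h3⟩
      refine ⟨h1, h2, ?_⟩
      intro u hu
      obtain ⟨huσ, hne⟩ := (hms_mem z u).1 hu
      by_contra hup
      exact hne (h3 u (Finset.mem_sdiff.2 ⟨huσ, hup⟩))
    · rintro ⟨h1, h2, h3⟩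
      refine ⟨h1, h2, ?_⟩
      intro r hr
      apply hadj_of_not_ms z r (Finset.mem_sdiff.1 hr).1
      intro hrm
      exact (Finset.mem_sdiff.1 hr).2 (h3 hrm)
  -- Step 2 : the matching property
  have hR_matching : ∀ z z' u v w : V, z ∈ verts Δ → z' ∈ verts Δ → z ∉ σ → z' ∉ σ →
      ms z = {u, v} → u ≠ v → ms z' = {u, w} → u ≠ w → v = w := by
    intro z z' u v w hz hz' hzσ hz'σ hmz huv hmz' huw
    by_contra hvw
    -- the three σ-vertices u, v, w are distinct
    have huσ : u ∈ σ := hms_sub z (hmz ▸ Finset.mem_insert_self u {v})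
    have hvσ : v ∈ σ := hms_sub z (hmz ▸ Finset.mem_insert_of_mem (Finset.mem_singleton_self v))
    have hwσ : w ∈ σ := hms_sub z' (hmz' ▸ Finset.mem_insert_of_mem (Finset.mem_singleton_self w))
    set τ : Finset V := σ \ {u, v, w} with hτ
    have huvwσ : ({u, v, w} : Finset V) ⊆ σ := by
      intro x hx
      rcases Finset.mem_insert.1 hx with rfl | hx
      · exact huσ
      rcases Finset.mem_insert.1 hx with rfl | hx
      · exact hvσ
      · rw [Finset.mem_singleton] at hx; exact hx ▸ hwσ
    have huvw3 : ({u, v, w} : Finset V).card = 3 := by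
      rw [Finset.card_insert_of_notMem, Finset.card_insert_of_notMem, Finset.card_singleton]
      · simpa using hvw
      · simp only [Finset.mem_insert, Finset.mem_singleton]
        push_neg
        exact ⟨huv, huw⟩
    have hτσ : τ ⊆ σ := Finset.sdiff_subset
    have hτcard : τ.card = 2 * m - 3 := by
      rw [hτ, Finset.card_sdiff_of_subset huvwσ, hσcard, huvw3]
    have hτΔ : τ ∈ Δ := hsub_faces τ hτσ
    obtain ⟨C, a, b, hC, hab, haC, hbC, hvL, hind, hapex, hcard2, hnab⟩ :=
      suspension_facts (hsusp τ hτσ hτcard)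
    set L := link Δ τ with hL
    -- membership of z, z', u, v, w in verts L
    have hmemL : ∀ x : V, x ∈ verts Δ → ms x ⊆ ({u, v, w} : Finset V) → x ∉ τ → x ∈ verts L := by
      intro x hx hmsx hxτ
      rw [hL, mem_verts_link hF hCplx hτΔ]
      refine ⟨hx, hxτ, ?_⟩
      intro r hr
      apply hadj_of_not_ms x r (hτσ hr)
      intro hrm
      exact (Finset.mem_sdiff.1 hr).2 (hmsx hrm)
    have hzL : z ∈ verts L := by
      apply hmemL z hz _ (fun h => hzσ (hτσ h))
      rw [hmz]
      intro x hx
      rcases Finset.mem_insert.1 hx with rfl | hx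
      · exact Finset.mem_insert_self x _
      · rw [Finset.mem_singleton] at hx
        subst hx
        exact Finset.mem_insert_of_mem (Finset.mem_insert_self x _)
    have hz'L : z' ∈ verts L := by
      apply hmemL z' hz' _ (fun h => hz'σ (hτσ h))
      rw [hmz']
      intro x hx
      rcases Finset.mem_insert.1 hx with rfl | hx
      · exact Finset.mem_insert_self x _
      · rw [Finset.mem_singleton] at hx
        subst hx
        exact Finset.mem_insert_of_mem (Finset.mem_insert_of_mem (Finset.mem_singleton_self x))
    have hσmemL : ∀ x, x ∈ ({u, v, w} : Finset V) → x ∈ verts L := by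
      intro x hx
      apply hmemL x (hσverts (huvwσ hx))
      · rw [hms_sigma x (huvwσ hx)]
        exact Finset.empty_subset _
      · intro h
        exact (Finset.mem_sdiff.1 h).2 hx
    -- {u,v,w} is a face of L
    have huvwL : ({u, v, w} : Finset V) ∈ L := by
      rw [hL, mem_link]
      refine ⟨hsub_faces _ huvwσ, ?_, ?_⟩
      · rw [Finset.eq_empty_iff_forall_notMem]
        intro x hx
        rw [Finset.mem_inter] at hx
        exact (Finset.mem_sdiff.1 hx.2).2 hx.1
      · rw [Finset.union_sdiff_of_subset huvwσ]
        exact hσΔ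
    -- classification of non-edges in L
    have hne_case : ∀ x y : V, x ∈ verts L → y ∈ verts L → x ≠ y →
        ({x, y} : Finset V) ∉ Δ →
        (x ∈ verts C ∧ y ∈ verts C) ∨ ({x, y} : Finset V) = {a, b} := by
      intro x y hx hy hxy hnadj
      have hnL : ({x, y} : Finset V) ∉ L := fun h => hnadj (link_subset h)
      have hx' := hvL ▸ hx
      have hy' := hvL ▸ hy
      rcases Finset.mem_union.1 hx' with hxC | hxab
      · rcases Finset.mem_union.1 hy' with hyC | hyab
        · exact Or.inl ⟨hxC, hyC⟩
        · exfalso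
          rcases Finset.mem_insert.1 hyab with rfl | hyb
          · exact hnL (hapex x hxC).1
          · rw [Finset.mem_singleton] at hyb
            subst hyb
            exact hnL (hapex x hxC).2
      · rcases Finset.mem_union.1 hy' with hyC | hyab
        · exfalso
          rcases Finset.mem_insert.1 hxab with rfl | hxb
          · exact hnL (Finset.pair_comm y x ▸ (hapex y hyC).1)
          · rw [Finset.mem_singleton] at hxb
            subst hxb
            exact hnL (Finset.pair_comm y x ▸ (hapex y hyC).2)
        · right
          rcases Finset.mem_insert.1 hxab with rfl | hxb <;>
            rcases Finset.mem_insert.1 hyab with h2 | h2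
          · exact absurd h2.symm hxy
          · rw [Finset.mem_singleton] at h2; rw [h2]
          · rw [Finset.mem_singleton] at hxb
            subst hxb
            rw [h2, Finset.pair_comm]
          · rw [Finset.mem_singleton] at hxb h2
            subst hxb
            exact absurd h2.symm hxy
    -- the four non-edges
    have hnadj_zu : ({z, u} : Finset V) ∉ Δ :=
      ((hms_mem z u).1 (hmz ▸ Finset.mem_insert_self u {v})).2
    have hnadj_zv : ({z, v} : Finset V) ∉ Δ :=
      ((hms_mem z v).1 (hmz ▸ Finset.mem_insert_of_mem (Finset.mem_singleton_self v))).2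
    have hnadj_z'u : ({z', u} : Finset V) ∉ Δ :=
      ((hms_mem z' u).1 (hmz' ▸ Finset.mem_insert_self u {w})).2
    have hnadj_z'w : ({z', w} : Finset V) ∉ Δ :=
      ((hms_mem z' w).1 (hmz' ▸ Finset.mem_insert_of_mem (Finset.mem_singleton_self w))).2
    have huL : u ∈ verts L := hσmemL u (Finset.mem_insert_self u _)
    have hvL2 : v ∈ verts L := hσmemL v (Finset.mem_insert_of_mem (Finset.mem_insert_self v _))
    have hwL : w ∈ verts L :=
      hσmemL w (Finset.mem_insert_of_mem (Finset.mem_insert_of_mem (Finset.mem_singleton_self w)))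
    have hzu : z ≠ u := fun h => hzσ (h ▸ huσ)
    have hzv : z ≠ v := fun h => hzσ (h ▸ hvσ)
    have hz'u : z' ≠ u := fun h => hz'σ (h ▸ huσ)
    have hz'w : z' ≠ w := fun h => hz'σ (h ▸ hwσ)
    have notC_of_ab : ∀ x : V, x ∈ ({a, b} : Finset V) → x ∉ verts C := by
      intro x hx
      rcases Finset.mem_insert.1 hx with rfl | hx
      · exact haC
      · rw [Finset.mem_singleton] at hx; exact hx ▸ hbC
    have mem_ab_of_pair : ∀ x y : V, ({x, y} : Finset V) = {a, b} →
        x ∈ ({a, b} : Finset V) ∧ y ∈ ({a, b} : Finset V) := by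
      intro x y h
      constructor
      · exact h ▸ Finset.mem_insert_self x {y}
      · exact h ▸ Finset.mem_insert_of_mem (Finset.mem_singleton_self y)
    rcases hne_case z u hzL huL hzu hnadj_zu with ⟨hzC, huC⟩ | he1
    · -- z, u are circle vertices
      have hvC : v ∈ verts C := by
        rcases hne_case z v hzL hvL2 hzv hnadj_zv with ⟨-, h⟩ | he
        · exact h
        · exact absurd hzC (notC_of_ab z (mem_ab_of_pair z v he).1)
      have hz'C : z' ∈ verts C := by
        rcases hne_case z' u hz'L huL hz'u hnadj_z'u with ⟨h, -⟩ | he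
        · exact h
        · exact absurd huC (notC_of_ab u (mem_ab_of_pair z' u he).2)
      have hwC : w ∈ verts C := by
        rcases hne_case z' w hz'L hwL hz'w hnadj_z'w with ⟨-, h⟩ | he
        · exact h
        · exact absurd hz'C (notC_of_ab z' (mem_ab_of_pair z' w he).1)
      have hsubC : ({u, v, w} : Finset V) ⊆ verts C := by
        intro x hx
        rcases Finset.mem_insert.1 hx with rfl | hx
        · exact huC
        rcases Finset.mem_insert.1 hx with rfl | hx
        · exact hvC
        · rw [Finset.mem_singleton] at hx; exact hx ▸ hwC
      have := hcard2 _ huvwL hsubC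
      omega
    · -- {z,u} = {a,b} : impossible together with the non-edge {z,v}
      obtain ⟨hz_ab, hu_ab⟩ := mem_ab_of_pair z u he1
      rcases hne_case z v hzL hvL2 hzv hnadj_zv with ⟨hzC, -⟩ | he2
      · exact absurd hzC (notC_of_ab z hz_ab)
      · obtain ⟨-, hv_ab⟩ := mem_ab_of_pair z v he2
        have hu' : u = a ∨ u = b := by simpa using hu_ab
        have hv' : v = a ∨ v = b := by simpa using hv_ab
        have hz'' : z = a ∨ z = b := by simpa using hz_ab
        rcases hz'' with rfl | rfl
        · have hu2 : u = b := hu'.resolve_left (fun h => hzu h.symm)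
          have hv2 : v = b := hv'.resolve_left (fun h => hzv h.symm)
          exact huv (hu2.trans hv2.symm)
        · have hu2 : u = a := hu'.resolve_right (fun h => hzu h.symm)
          have hv2 : v = a := hv'.resolve_right (fun h => hzv h.symm)
          exact huv (hu2.trans hv2.symm)
  -- pairs decomposition helper
  have pair_decomp : ∀ (p : Finset V) (x : V), p.card = 2 → x ∈ p →
      ∃ y, y ≠ x ∧ p = {x, y} := by
    intro p x hp2 hxp
    obtain ⟨c, d, hcd, rfl⟩ := Finset.card_eq_two.1 hp2
    rcases Finset.mem_insert.1 hxp with rfl | hxd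
    · exact ⟨d, fun h => hcd h.symm, rfl⟩
    · rw [Finset.mem_singleton] at hxd
      subst hxd
      exact ⟨c, fun h => hcd h, Finset.pair_comm c x⟩
  -- the set of forced pairs
  set M : Finset (Finset V) :=
    (σ.powersetCard 2).filter (fun p => ∃ z ∈ verts Δ, z ∉ σ ∧ ms z = p) with hMdef
  have hMprop : ∀ p ∈ M, p.card = 2 ∧ p ⊆ σ := by
    intro p hp
    have := (Finset.mem_filter.1 hp).1
    rw [Finset.mem_powersetCard] at this
    exact ⟨this.2, this.1⟩
  have hMdisj : ∀ p ∈ M, ∀ q ∈ M, p ≠ q → p ∩ q = ∅ := by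
    intro p hp q hq hpq
    rw [Finset.eq_empty_iff_forall_notMem]
    intro x hx
    rw [Finset.mem_inter] at hx
    obtain ⟨z, hz, hzσ, hmz⟩ := (Finset.mem_filter.1 hp).2
    obtain ⟨z', hz', hz'σ, hmz'⟩ := (Finset.mem_filter.1 hq).2
    obtain ⟨y1, hy1, hpe⟩ := pair_decomp p x (hMprop p hp).1 hx.1
    obtain ⟨y2, hy2, hqe⟩ := pair_decomp q x (hMprop q hq).1 hx.2
    have := hR_matching z z' x y1 y2 hz hz' hzσ hz'σ (hmz.trans hpe) (fun h => hy1 h.symm)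
      (hmz'.trans hqe) (fun h => hy2 h.symm)
    exact hpq (hpe.trans (by rw [this, ← hqe]))
  -- complete M to a perfect pairing N of σ
  obtain ⟨N, hMN, hNprop, hNdisj, hNun, hNcard⟩ := exists_pairing m σ hσcard M hMprop hMdisj
  -- every outside vertex's non-neighbor set lies in a unique pair of N
  have hms_in_pair : ∀ z, z ∈ verts Δ → z ∉ σ → ∃ p ∈ N, ms z ⊆ p := by
    intro z hz hzσ
    have h1 := hms_ne z hz hzσ
    have h2 := hms_le2 z hz
    interval_cases h : (ms z).card
    · exact absurd (Finset.card_eq_zero.1 h) (Finset.nonempty_iff_ne_empty.1 h1)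
    · obtain ⟨u, hu⟩ := Finset.card_eq_one.1 h
      have huσ : u ∈ σ := hms_sub z (hu ▸ Finset.mem_singleton_self u)
      rw [← hNun] at huσ
      obtain ⟨p, hp, hup⟩ := Finset.mem_biUnion.1 huσ
      refine ⟨p, hp, ?_⟩
      rw [hu]
      exact Finset.singleton_subset_iff.2 hup
    · refine ⟨ms z, hMN ?_, le_refl _⟩
      rw [hMdef, Finset.mem_filter, Finset.mem_powersetCard]
      exact ⟨⟨hms_sub z, h⟩, z, hz, hzσ, rfl⟩
  have hmixed : ∀ z, z ∈ verts Δ → z ∉ σ → ∀ p ∈ N, (ms z ∩ p).Nonempty → ms z ⊆ p := by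
    intro z hz hzσ p hp hne
    obtain ⟨q, hq, hzq⟩ := hms_in_pair z hz hzσ
    by_cases hpq : p = q
    · exact hpq ▸ hzq
    · exfalso
      obtain ⟨x, hx⟩ := hne
      rw [Finset.mem_inter] at hx
      have := hNdisj q hq p hp (fun h => hpq h.symm)
      rw [Finset.eq_empty_iff_forall_notMem] at this
      exact this x (Finset.mem_inter.2 ⟨hzq hx.1, hx.2⟩)
  -- block membership facts
  have hblockσ : ∀ p ∈ N, ∀ x ∈ σ, (x ∈ verts (link Δ (σ \ p)) ↔ x ∈ p) := by
    intro p hp x hxσ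
    rw [hvZ p (hNprop p hp).2]
    constructor
    · rintro ⟨-, h2, -⟩
      by_contra hxp
      exact h2 (Finset.mem_sdiff.2 ⟨hxσ, hxp⟩)
    · intro hxp
      exact ⟨hσverts hxσ, fun h => (Finset.mem_sdiff.1 h).2 hxp,
        by rw [hms_sigma x hxσ]; exact Finset.empty_subset _⟩
  have hblock_cover : ∀ x ∈ verts Δ, ∃ p ∈ N, x ∈ verts (link Δ (σ \ p)) := by
    intro x hx
    by_cases hxσ : x ∈ σ
    · have := hxσ
      rw [← hNun] at this
      obtain ⟨p, hp, hxp⟩ := Finset.mem_biUnion.1 this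
      exact ⟨p, hp, (hblockσ p hp x hxσ).2 hxp⟩
    · obtain ⟨p, hp, hmsp⟩ := hms_in_pair x hx hxσ
      refine ⟨p, hp, (hvZ p (hNprop p hp).2 x).2 ⟨hx, fun h => hxσ (Finset.mem_sdiff.1 h).1, hmsp⟩⟩
  have hblock_disj : ∀ p ∈ N, ∀ q ∈ N, p ≠ q → ∀ x, x ∈ verts (link Δ (σ \ p)) →
      x ∈ verts (link Δ (σ \ q)) → False := by
    intro p hp q hq hpq x hxp hxq
    obtain ⟨hx1, hx2, hx3⟩ := (hvZ p (hNprop p hp).2 x).1 hxp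
    obtain ⟨-, hy2, hy3⟩ := (hvZ q (hNprop q hq).2 x).1 hxq
    by_cases hxσ : x ∈ σ
    · have hxp' : x ∈ p := by
        by_contra h
        exact hx2 (Finset.mem_sdiff.2 ⟨hxσ, h⟩)
      have hxq' : x ∈ q := by
        by_contra h
        exact hy2 (Finset.mem_sdiff.2 ⟨hxσ, h⟩)
      have := hNdisj p hp q hq hpq
      rw [Finset.eq_empty_iff_forall_notMem] at this
      exact this x (Finset.mem_inter.2 ⟨hxp', hxq'⟩)
    · obtain ⟨u, hu⟩ := hms_ne x hx1 hxσ
      have := hNdisj p hp q hq hpq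
      rw [Finset.eq_empty_iff_forall_notMem] at this
      exact this u (Finset.mem_inter.2 ⟨hx3 hu, hy3 hu⟩)
  -- CROSS-ADJACENCY : vertices in distinct blocks are adjacent
  have hcross : ∀ p ∈ N, ∀ q ∈ N, p ≠ q → ∀ x y : V,
      x ∈ verts (link Δ (σ \ p)) → y ∈ verts (link Δ (σ \ q)) →
      ({x, y} : Finset V) ∈ Δ := by
    intro p hp q hq hpq x y hx hy
    obtain ⟨hp2, hpσ⟩ := hNprop p hp
    obtain ⟨hq2, hqσ⟩ := hNprop q hq
    have hZ1 : IsCircle (link Δ (σ \ p)) := hZcircle p hpσ hp2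
    have hZ2 : IsCircle (link Δ (σ \ q)) := hZcircle q hqσ hq2
    -- an edge of the second circle through y
    obtain ⟨e, heZ, he2, hye⟩ := circle_exists_edge_at hZ2 hy
    have heverts : e ⊆ verts (link Δ (σ \ q)) := face_subset_verts heZ
    have hvq : ∀ t ∈ e, t ∈ verts Δ ∧ t ∉ σ \ q ∧ ms t ⊆ q := by
      intro t ht
      exact (hvZ q hqσ t).1 (heverts ht)
    set ρ : Finset V := σ \ (p ∪ q) with hρdef
    have hρσ : ρ ⊆ σ := Finset.sdiff_subset
    have hρq : ρ ⊆ σ \ q := by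
      intro r hr
      rw [Finset.mem_sdiff] at hr ⊢
      exact ⟨hr.1, fun h => hr.2 (Finset.mem_union_right p h)⟩
    have heρ : e ∩ ρ = ∅ := by
      rw [Finset.eq_empty_iff_forall_notMem]
      intro t ht
      rw [Finset.mem_inter] at ht
      exact (hvq t ht.1).2.1 (hρq ht.2)
    set η : Finset V := e ∪ ρ with hηdef
    have hηΔ : η ∈ Δ := by
      apply flag_clique_mem hF hCplx
      · intro t ht
        rcases Finset.mem_union.1 ht with ht | ht
        · exact (hvq t ht).1
        · exact hσverts (hρσ ht)
      · intro t ht r hr htr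
        rcases Finset.mem_union.1 ht with ht | ht <;> rcases Finset.mem_union.1 hr with hr | hr
        · exact pair_mem_of_face hCplx (link_subset heZ) ht hr
        · apply hadj_of_not_ms t r (hρσ hr)
          intro hrm
          have := (hvq t ht).2.2 hrm
          exact (Finset.mem_sdiff.1 (hρq hr)).2 this
        · rw [Finset.pair_comm]
          apply hadj_of_not_ms r t (hρσ ht)
          intro htm
          have := (hvq r hr).2.2 htm
          exact (Finset.mem_sdiff.1 (hρq ht)).2 this
        · exact pair_mem_of_face hCplx hσΔ (hρσ ht) (hρσ hr)
    have hρcard : ρ.card = 2 * m - 4 := by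
      have hpqσ : p ∪ q ⊆ σ := Finset.union_subset hpσ hqσ
      have hpq4 : (p ∪ q).card = 4 := by
        rw [Finset.card_union_of_disjoint
          (Finset.disjoint_iff_inter_eq_empty.2 (hNdisj p hp q hq hpq)), hp2, hq2]
      rw [hρdef, Finset.card_sdiff_of_subset hpqσ, hσcard, hpq4]
    have hηcard : η.card = 2 * m - 2 := by
      rw [hηdef, Finset.card_union_of_disjoint (Finset.disjoint_iff_inter_eq_empty.2 heρ),
        he2, hρcard]
      omega
    have hW : IsCircle (link Δ η) :=
      link_codim2_isCircle ⟨hPM, hConnΔ, hlinks⟩ (by omega) hηΔ hηcard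
    -- every vertex of the small circle lies in the first block
    have hWsub : ∀ w', w' ∈ verts (link Δ η) → w' ∈ verts (link Δ (σ \ p)) := by
      intro w' hw'
      obtain ⟨hw1, hw2, hw3⟩ := (mem_verts_link hF hCplx hηΔ).1 hw'
      have hmw : ms w' ⊆ p ∪ q := by
        intro u hu
        obtain ⟨huσ, hune⟩ := (hms_mem w' u).1 hu
        by_contra hupq
        exact hune (hw3 u (Finset.mem_union_right e (Finset.mem_sdiff.2 ⟨huσ, hupq⟩)))
      have hwZ2 : w' ∉ verts (link Δ (σ \ q)) := by
        intro hwq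
        have hw'e : w' ∉ e := fun h => hw2 (Finset.mem_union_left ρ h)
        have htri : insert w' e ∈ link Δ (σ \ q) := by
          rw [mem_link]
          have hall : ∀ t ∈ insert w' e, t ∈ verts (link Δ (σ \ q)) := by
            intro t ht
            rcases Finset.mem_insert.1 ht with rfl | ht
            · exact hwq
            · exact heverts ht
          have hpairs : ∀ t ∈ insert w' e, ∀ r ∈ insert w' e, t ≠ r →
              ({t, r} : Finset V) ∈ Δ := by
            intro t ht r hr htr
            rcases Finset.mem_insert.1 ht with rfl | ht <;> rcases Finset.mem_insert.1 hr with h2 | h2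
            · exact absurd h2.symm htr
            · exact hw3 r (Finset.mem_union_left ρ h2)
            · rw [Finset.pair_comm]
              rw [h2] at htr ⊢
              exact hw3 t (Finset.mem_union_left ρ ht)
            · exact pair_mem_of_face hCplx (link_subset heZ) ht h2
          have hmem : insert w' e ∈ Δ := by
            apply flag_clique_mem hF hCplx
            · intro t ht
              obtain ⟨h1, -, -⟩ := (hvZ q hqσ t).1 (hall t ht)
              exact h1
            · exact hpairs
          refine ⟨hmem, ?_, ?_⟩
          · rw [Finset.eq_empty_iff_forall_notMem]
            intro t ht
            rw [Finset.mem_inter] at ht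
            exact ((hvZ q hqσ t).1 (hall t ht.1)).2.1 ht.2
          · apply flag_clique_mem hF hCplx
            · intro t ht
              rcases Finset.mem_union.1 ht with ht | ht
              · exact ((hvZ q hqσ t).1 (hall t ht)).1
              · exact hσverts (Finset.mem_sdiff.1 ht).1
            · intro t ht r hr htr
              rcases Finset.mem_union.1 ht with ht | ht <;>
                rcases Finset.mem_union.1 hr with hr | hr
              · exact hpairs t ht r hr htr
              · apply hadj_of_not_ms t r (Finset.mem_sdiff.1 hr).1
                intro hrm
                exact (Finset.mem_sdiff.1 hr).2 (((hvZ q hqσ t).1 (hall t ht)).2.2 hrm)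
              · rw [Finset.pair_comm]
                apply hadj_of_not_ms r t (Finset.mem_sdiff.1 ht).1
                intro htm
                exact (Finset.mem_sdiff.1 ht).2 (((hvZ q hqσ r).1 (hall r hr)).2.2 htm)
              · exact pair_mem_of_face hCplx hσΔ (Finset.mem_sdiff.1 ht).1
                  (Finset.mem_sdiff.1 hr).1
        have := circle_face_card_le hZ2 htri
        rw [Finset.card_insert_of_notMem hw'e, he2] at this
        omega
      by_cases hwσ : w' ∈ σ
      · have hwpq : w' ∈ p ∪ q := by
          by_contra h
          exact hw2 (Finset.mem_union_right e (Finset.mem_sdiff.2 ⟨hwσ, h⟩))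
        rcases Finset.mem_union.1 hwpq with hwp | hwq'
        · exact (hblockσ p hp w' hwσ).2 hwp
        · exact absurd ((hblockσ q hq w' hwσ).2 hwq') hwZ2
      · have hmsp : ms w' ⊆ p := by
          by_cases hq' : (ms w' ∩ q).Nonempty
          · exfalso
            apply hwZ2
            exact (hvZ q hqσ w').2 ⟨hw1, fun h => hwσ (Finset.mem_sdiff.1 h).1,
              hmixed w' hw1 hwσ q hq hq'⟩
          · intro u hu
            rcases Finset.mem_union.1 (hmw hu) with h | h
            · exact h
            · exact absurd ⟨u, Finset.mem_inter.2 ⟨hu, h⟩⟩ hq'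
        exact (hvZ p hpσ w').2 ⟨hw1, fun h => hwσ (Finset.mem_sdiff.1 h).1, hmsp⟩
    -- closure of the small circle's vertex set under edges of the first circle
    have hclosure : ∀ w1 w2 : V, w1 ∈ verts (link Δ η) →
        ({w1, w2} : Finset V) ∈ link Δ (σ \ p) → w2 ∈ verts (link Δ η) := by
      intro w1 w2 hw1 hedge
      by_cases hww : w1 = w2
      · exact hww ▸ hw1
      have hcard12 : ({w1, w2} : Finset V).card = 2 := Finset.card_pair hww
      set EW := (link Δ η).filter (fun γ => γ.card = 2 ∧ ({w1} : Finset V) ⊆ γ) with hEW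
      set EZ := (link Δ (σ \ p)).filter (fun γ => γ.card = 2 ∧ ({w1} : Finset V) ⊆ γ) with hEZ
      have hsubE : EW ⊆ EZ := by
        intro γ hγ
        rw [hEW, Finset.mem_filter] at hγ
        obtain ⟨hγW, hγ2, hγw⟩ := hγ
        obtain ⟨c, d, hcd, rfl⟩ := Finset.card_eq_two.1 hγ2
        have hcW : c ∈ verts (link Δ η) :=
          face_subset_verts hγW (Finset.mem_insert_self c {d})
        have hdW : d ∈ verts (link Δ η) :=
          face_subset_verts hγW (Finset.mem_insert_of_mem (Finset.mem_singleton_self d))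
        rw [hEZ, Finset.mem_filter]
        exact ⟨link_induced_edge hF hCplx (hδface p) (hWsub c hcW) (hWsub d hdW)
          (link_subset hγW), hγ2, hγw⟩
      have hEWcard : EW.card = 2 := circle_edges_at hW hw1
      have hEZcard : EZ.card = 2 := circle_edges_at hZ1 (hWsub w1 hw1)
      have hEeq : EW = EZ := Finset.eq_of_subset_of_card_le hsubE (by omega)
      have hmemEZ : ({w1, w2} : Finset V) ∈ EZ := by
        rw [hEZ, Finset.mem_filter]
        exact ⟨hedge, hcard12, Finset.singleton_subset_iff.2 (Finset.mem_insert_self w1 {w2})⟩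
      rw [← hEeq, hEW, Finset.mem_filter] at hmemEZ
      exact face_subset_verts hmemEZ.1 (Finset.mem_insert_of_mem (Finset.mem_singleton_self w2))
    have hveq : verts (link Δ η) = verts (link Δ (σ \ p)) :=
      verts_eq_of_closed hZ1.2 (fun w' hw' => hWsub w' hw')
        (circle_verts_nonempty hW) hclosure
    have hxW : x ∈ verts (link Δ η) := by rw [hveq]; exact hx
    have hface : ({x} : Finset V) ∪ η ∈ Δ :=
      (mem_link.1 (singleton_mem_of_mem_verts (link_isComplex hCplx η hηΔ) hxW)).2.2
    exact pair_mem_of_face hCplx hface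
      (Finset.mem_union_left η (Finset.mem_singleton_self x))
      (Finset.mem_union_right _ (Finset.mem_union_left ρ hye))
  -- enumeration of the pairs
  set pi : Fin m → Finset V := fun i => ((N.equivFin.symm (Fin.cast hNcard.symm i)) : Finset V)
    with hpi
  have hpiN : ∀ i, pi i ∈ N := fun i => (N.equivFin.symm _).2
  have hpiinj : ∀ i j, i ≠ j → pi i ≠ pi j := by
    intro i j hij h
    apply hij
    rw [hpi] at h
    have h2 : Fin.cast hNcard.symm i = Fin.cast hNcard.symm j :=
      N.equivFin.symm.injective (Subtype.coe_injective h)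
    have h3 := congrArg Fin.val h2
    simp only [Fin.coe_cast] at h3
    exact Fin.ext h3
  have hpisurj : ∀ p ∈ N, ∃ i, pi i = p := by
    intro p hp
    refine ⟨Fin.cast hNcard (N.equivFin ⟨p, hp⟩), ?_⟩
    have h1 : Fin.cast hNcard.symm (Fin.cast hNcard (N.equivFin ⟨p, hp⟩)) =
        N.equivFin ⟨p, hp⟩ := Fin.ext rfl
    calc pi (Fin.cast hNcard (N.equivFin ⟨p, hp⟩))
        = ((N.equivFin.symm (Fin.cast hNcard.symm
            (Fin.cast hNcard (N.equivFin ⟨p, hp⟩)))) : Finset V) := rfl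
      _ = ((N.equivFin.symm (N.equivFin ⟨p, hp⟩)) : Finset V) := by rw [h1]
      _ = p := by rw [Equiv.symm_apply_apply]
  refine ⟨fun i => link Δ (σ \ pi i), ?_, ?_, ?_⟩
  · intro i
    exact hZcircle (pi i) (hNprop _ (hpiN i)).2 (hNprop _ (hpiN i)).1
  · intro i j hij
    rw [Finset.disjoint_left]
    intro x h1 h2
    exact hblock_disj (pi i) (hpiN i) (pi j) (hpiN j) (hpiinj i j hij) x h1 h2
  · -- Δ is the iterated join
    apply Finset.ext
    intro S
    rw [mem_joinFam]
    constructor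
    · intro hS
      refine ⟨fun i => S ∩ verts (link Δ (σ \ pi i)), ?_, ?_⟩
      · intro i
        have hpiσ : pi i ⊆ σ := (hNprop _ (hpiN i)).2
        rw [mem_link]
        refine ⟨hCplx.2 S hS _ Finset.inter_subset_left, ?_, ?_⟩
        · rw [Finset.eq_empty_iff_forall_notMem]
          intro t ht
          rw [Finset.mem_inter] at ht
          exact ((hvZ (pi i) hpiσ t).1 (Finset.mem_inter.1 ht.1).2).2.1 ht.2
        · apply flag_clique_mem hF hCplx
          · intro t ht
            rcases Finset.mem_union.1 ht with ht | ht
            · exact face_subset_verts hS (Finset.mem_inter.1 ht).1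
            · exact hσverts (Finset.mem_sdiff.1 ht).1
          · intro t ht r hr htr
            rcases Finset.mem_union.1 ht with ht | ht <;>
              rcases Finset.mem_union.1 hr with hr | hr
            · exact pair_mem_of_face hCplx hS (Finset.mem_inter.1 ht).1
                (Finset.mem_inter.1 hr).1
            · apply hadj_of_not_ms t r (Finset.mem_sdiff.1 hr).1
              intro hrm
              exact (Finset.mem_sdiff.1 hr).2
                (((hvZ (pi i) hpiσ t).1 (Finset.mem_inter.1 ht).2).2.2 hrm)
            · rw [Finset.pair_comm]
              apply hadj_of_not_ms r t (Finset.mem_sdiff.1 ht).1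
              intro htm
              exact (Finset.mem_sdiff.1 ht).2
                (((hvZ (pi i) hpiσ r).1 (Finset.mem_inter.1 hr).2).2.2 htm)
            · exact pair_mem_of_face hCplx hσΔ (Finset.mem_sdiff.1 ht).1
                (Finset.mem_sdiff.1 hr).1
      · ext u
        rw [Finset.mem_sup]
        constructor
        · intro hu
          obtain ⟨p, hp, hup⟩ := hblock_cover u (face_subset_verts hS hu)
          obtain ⟨i, rfl⟩ := hpisurj p hp
          exact ⟨i, Finset.mem_univ i, Finset.mem_inter.2 ⟨hu, hup⟩⟩
        · rintro ⟨i, -, hui⟩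
          exact (Finset.mem_inter.1 hui).1
    · rintro ⟨f, hf, rfl⟩
      apply flag_clique_mem hF hCplx
      · intro u hu
        obtain ⟨i, -, hui⟩ := Finset.mem_sup.1 hu
        exact ((hvZ (pi i) (hNprop _ (hpiN i)).2 u).1 (face_subset_verts (hf i) hui)).1
      · intro u hu v hv huv
        obtain ⟨i, -, hui⟩ := Finset.mem_sup.1 hu
        obtain ⟨j, -, hvj⟩ := Finset.mem_sup.1 hv
        by_cases hij : i = j
        · subst hij
          exact pair_mem_of_face hCplx (link_subset (hf i)) hui hvj
        · exact hcross (pi i) (hpiN i) (pi j) (hpiN j) (hpiinj i j hij) u v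
            (face_subset_verts (hf i) hui) (face_subset_verts (hf j) hvj)
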